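/- For rationals a, d with d > 0, write a = a_1/a_2 and d = d_1/d_2 in lowest terms with a_2, d_2 > 0. Then the Fourier transform of χ_{a+dℤ} (with respect to the Haar distribution normalized so that ℤ has measure 1) is given by ŷ ↦ (1/d)·e^{-2πi a y}·χ_{(1/d)ℤ}(y). -/

import Mathlib

open Complex

/-- `e(z) = exp(2πiz)`. -/
noncomputable def e (z : ℂ) : ℂ := Complex.exp (2 * Real.pi * I * z)

open Classical in
/-- The (ℂ-valued) characteristic function of the arithmetic progression `a + dℤ` in `ℚ`. -/
noncomputable def ind (a d : ℚ) : ℚ → ℂ :=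
  fun x => if ∃ k : ℤ, x = a + d * k then 1 else 0

/-- `S(ℚ)` with complex coefficients: the span of the characteristic functions of
arithmetic progressions `a + dℤ` with `d > 0`. -/
noncomputable def Sc : Submodule ℂ (ℚ → ℂ) :=
  Submodule.span ℂ {f | ∃ a d : ℚ, 0 < d ∧ f = ind a d}

lemma ind_mem (a d : ℚ) (hd : 0 < d) : ind a d ∈ Sc :=
  Submodule.subset_span ⟨a, d, hd, rfl⟩

lemma e_add (z w : ℂ) : e (z + w) = e z * e w := by
  simp [e, mul_add, Complex.exp_add]

lemma e_rat_eq_one_iff (q : ℚ) : e (q : ℂ) = 1 ↔ ∃ n : ℤ, q = n := by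
  rw [e, Complex.exp_eq_one_iff]
  constructor
  · rintro ⟨n, hn⟩
    refine ⟨n, ?_⟩
    have h2 : (2 * Real.pi * I : ℂ) ≠ 0 := by
      simp [Real.pi_ne_zero, Complex.I_ne_zero]
    have : (q : ℂ) = (n : ℂ) := by
      have : (2 * Real.pi * I : ℂ) * q = (2 * Real.pi * I) * n := by
        rw [hn]; ring
      exact mul_left_cancel₀ h2 this
    exact_mod_cast this
  · rintro ⟨n, hn⟩
    exact ⟨n, by rw [hn]; push_cast; ring⟩

lemma e_int (n : ℤ) : e (n : ℂ) = 1 := by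
  have := (e_rat_eq_one_iff n).2 ⟨n, by norm_cast⟩
  simpa using this

lemma h_ext (h : Sc →ₗ[ℂ] ℂ) {f g : ℚ → ℂ} (hf : f ∈ Sc) (hg : g ∈ Sc)
    (hfg : f = g) : h ⟨f, hf⟩ = h ⟨g, hg⟩ := by subst hfg; rfl

lemma ind_shift (a d t : ℚ) : (fun x => ind a d (x + t)) = ind (a - t) d := by
  funext x
  unfold ind
  congr 1
  simp only [eq_iff_iff]
  constructor
  · rintro ⟨k, hk⟩; exact ⟨k, by linarith⟩
  · rintro ⟨k, hk⟩; exact ⟨k, by linarith⟩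

lemma ind_sum (a c : ℚ) (hc : 0 < c) (n : ℕ) (hn : 0 < n) :
    ind a c = fun x => ∑ k ∈ Finset.range n, ind (a + k * c) (n * c) x := by
  funext x
  unfold ind
  by_cases hx : ∃ m : ℤ, x = a + c * m
  · obtain ⟨m, hm⟩ := hx
    rw [if_pos ⟨m, hm⟩]
    have hn' : (0:ℤ) < n := by exact_mod_cast hn
    have hmod : 0 ≤ m % n := Int.emod_nonneg m (by omega)
    have hmodlt : m % n < n := Int.emod_lt_of_pos m hn'
    set k0 : ℕ := (m % n).toNat with hk0
    have hk0' : (k0 : ℤ) = m % n := Int.toNat_of_nonneg hmod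
    have hk0lt : k0 < n := by omega
    rw [Finset.sum_eq_single k0]
    · rw [if_pos]
      refine ⟨m / n, ?_⟩
      have hint : (k0 : ℤ) + n * (m / n) = m := by rw [hk0']; exact Int.emod_add_mul_ediv m n
      have hintq : ((k0 : ℚ)) + (n:ℚ) * ((m / n : ℤ) : ℚ) = (m:ℚ) := by
        exact_mod_cast congrArg (fun z : ℤ => (z:ℚ)) hint
      rw [hm]
      linear_combination (-c) * hintq
    · intro b hb hbne
      rw [if_neg]
      rintro ⟨j, hj⟩
      apply hbne
      have hb' : b < n := Finset.mem_range.mp hb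
      have h1 : c * (m:ℚ) = c * ((b:ℚ) + (n:ℚ) * (j:ℚ)) := by
        linear_combination hj - hm
      have h2 : (m:ℚ) = ((b + n*j : ℤ) : ℚ) := by
        push_cast
        exact mul_left_cancel₀ hc.ne' h1
      have h3 : m = b + n*j := by exact_mod_cast h2
      have hb0 : (b:ℤ) = m % n := by
        rw [h3, Int.add_mul_emod_self_left,
          Int.emod_eq_of_lt (Int.ofNat_nonneg b) (by exact_mod_cast hb')]
      omega
    · intro hk
      exact absurd (Finset.mem_range.mpr hk0lt) hk
  · rw [if_neg hx]
    refine (Finset.sum_eq_zero ?_).symm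
    intro b hb
    rw [if_neg]
    rintro ⟨j, hj⟩
    exact hx ⟨b + n*j, by rw [hj]; push_cast; ring⟩

lemma h_ind_translate (h : Sc →ₗ[ℂ] ℂ)
    (hinv : ∀ (t : ℚ) (f : ℚ → ℂ) (hf : f ∈ Sc) (hf' : (fun x => f (x + t)) ∈ Sc),
      h ⟨fun x => f (x + t), hf'⟩ = h ⟨f, hf⟩)
    (a d : ℚ) (hd : 0 < d) (hm1 : ind a d ∈ Sc) (hm2 : ind 0 d ∈ Sc) :
    h ⟨ind a d, hm1⟩ = h ⟨ind 0 d, hm2⟩ := by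
  have hshift : (fun x => ind a d (x + a)) = ind 0 d := by
    rw [ind_shift, sub_self]
  have hmem' : (fun x => ind a d (x + a)) ∈ Sc := by
    rw [hshift]; exact ind_mem 0 d hd
  rw [← hinv a (ind a d) hm1 hmem']
  exact h_ext h hmem' hm2 hshift

lemma h_ind_step (h : Sc →ₗ[ℂ] ℂ)
    (hinv : ∀ (t : ℚ) (f : ℚ → ℂ) (hf : f ∈ Sc) (hf' : (fun x => f (x + t)) ∈ Sc),
      h ⟨fun x => f (x + t), hf'⟩ = h ⟨f, hf⟩)
    (c : ℚ) (hc : 0 < c) (n : ℕ) (hn : 0 < n)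
    (hm : ind 0 c ∈ Sc) (hm' : ind 0 ((n:ℚ)*c) ∈ Sc) :
    h ⟨ind 0 c, hm⟩ = (n : ℂ) * h ⟨ind 0 ((n:ℚ)*c), hm'⟩ := by
  have hnc : (0:ℚ) < n * c := by positivity
  have key : (⟨ind 0 c, hm⟩ : Sc)
      = ∑ k ∈ Finset.range n, ⟨ind ((k:ℚ) * c) ((n:ℚ)*c), ind_mem _ _ hnc⟩ := by
    apply Subtype.ext
    simp only [AddSubmonoidClass.coe_finset_sum]
    rw [ind_sum 0 c hc n hn]
    funext x
    rw [Finset.sum_apply]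
    simp [zero_add]
  rw [key, map_sum]
  refine (Finset.sum_congr rfl fun (k : ℕ) _ =>
    h_ind_translate h hinv ((k:ℚ)*c) ((n:ℚ)*c) hnc (ind_mem _ _ hnc) hm').trans ?_
  simp [Finset.sum_const, nsmul_eq_mul]

lemma h_ind_val (h : Sc →ₗ[ℂ] ℂ)
    (hnorm : ∀ hm : ind 0 1 ∈ Sc, h ⟨ind 0 1, hm⟩ = 1)
    (hinv : ∀ (t : ℚ) (f : ℚ → ℂ) (hf : f ∈ Sc) (hf' : (fun x => f (x + t)) ∈ Sc),
      h ⟨fun x => f (x + t), hf'⟩ = h ⟨f, hf⟩)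
    (d : ℚ) (hd : 0 < d) (hm : ind 0 d ∈ Sc) :
    h ⟨ind 0 d, hm⟩ = 1 / (d : ℂ) := by
  set q : ℕ := d.den with hqdef
  set p : ℕ := d.num.toNat with hpdef
  have hq : 0 < q := d.pos
  have hnum : 0 < d.num := Rat.num_pos.mpr hd
  have hp : 0 < p := by omega
  have hqQ : (0:ℚ) < 1/(q:ℚ) := by positivity
  have hqq : (q:ℚ) * (1/(q:ℚ)) = 1 := by
    field_simp
  have hpZ : (p:ℤ) = d.num := Int.toNat_of_nonneg hnum.le
  have hpQ2 : (p:ℚ) = (d.num:ℚ) := by exact_mod_cast hpZ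
  have hpq : (p:ℚ) * (1/(q:ℚ)) = d := by
    rw [hpQ2, hqdef, mul_one_div]
    exact Rat.num_div_den d
  have m1 : ind 0 ((q:ℚ)*(1/(q:ℚ))) ∈ Sc := ind_mem _ _ (by positivity)
  have m2 : ind 0 (1/(q:ℚ)) ∈ Sc := ind_mem _ _ hqQ
  have m3 : ind 0 1 ∈ Sc := ind_mem _ _ one_pos
  have m4 : ind 0 ((p:ℚ)*(1/(q:ℚ))) ∈ Sc := ind_mem _ _ (by positivity)
  have h1 : h ⟨ind 0 (1/(q:ℚ)), m2⟩ = (q:ℂ) := by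
    rw [h_ind_step h hinv _ hqQ q hq m2 m1, h_ext h m1 m3 (by rw [hqq]), hnorm m3, mul_one]
  have h2 : h ⟨ind 0 (1/(q:ℚ)), m2⟩ = (p:ℂ) * h ⟨ind 0 d, hm⟩ := by
    rw [h_ind_step h hinv _ hqQ p hp m2 m4, h_ext h m4 hm (by rw [hpq])]
  have hpC : (p:ℂ) ≠ 0 := by exact_mod_cast hp.ne'
  have hqC : (q:ℂ) ≠ 0 := by exact_mod_cast hq.ne'
  have hdC : (d:ℂ) = (p:ℂ) / (q:ℂ) := by
    rw [← hpq]; push_cast; ring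
  rw [h1] at h2
  rw [hdC]
  field_simp
  linear_combination -h2

lemma ind_eq_one {a d x : ℚ} (h : ∃ k : ℤ, x = a + d * k) : ind a d x = 1 := by
  unfold ind; exact if_pos h

lemma ind_eq_zero {a d x : ℚ} (h : ¬∃ k : ℤ, x = a + d * k) : ind a d x = 0 := by
  unfold ind; exact if_neg h


/-- For the Haar distribution `h_ℤ` on `S(ℚ)` (the translation-invariant distribution
normalized by `h_ℤ(χ_ℤ) = 1`), the Fourier transform of `χ_{a+dℤ}` is
`y ↦ (1/d)·e^{-2πi a y}·χ_{(1/d)ℤ}(y)`. -/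
theorem fourier_transform_ind
    (h : Sc →ₗ[ℂ] ℂ)
    (hnorm : ∀ hm : ind 0 1 ∈ Sc, h ⟨ind 0 1, hm⟩ = 1)
    (hinv : ∀ (t : ℚ) (f : ℚ → ℂ) (hf : f ∈ Sc) (hf' : (fun x => f (x + t)) ∈ Sc),
      h ⟨fun x => f (x + t), hf'⟩ = h ⟨f, hf⟩)
    (a d : ℚ) (hd : 0 < d) (y : ℚ)
    (hmem : (fun x => ind a d x * e (-((x : ℂ) * (y : ℂ)))) ∈ Sc) :
    h ⟨fun x => ind a d x * e (-((x : ℂ) * (y : ℂ))), hmem⟩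
      = (1 / (d : ℂ)) * e (-((a : ℂ) * (y : ℂ))) * ind 0 (1 / d) y := by
  set f : ℚ → ℂ := fun x => ind a d x * e (-((x : ℂ) * (y : ℂ))) with hfdef
  by_cases hy : ∃ m : ℤ, y = 0 + (1/d) * m
  · obtain ⟨m, hm⟩ := hy
    have hdy : d * y = (m : ℚ) := by
      rw [hm]; field_simp; ring
    have hdyC : (d:ℂ) * (y:ℂ) = (m:ℂ) := by exact_mod_cast congrArg (Rat.cast (K := ℂ)) hdy
    have hfeq : f = e (-((a:ℂ)*(y:ℂ))) • ind a d := by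
      funext x
      simp only [hfdef, Pi.smul_apply, smul_eq_mul]
      by_cases hx : ∃ k : ℤ, x = a + d * k
      · obtain ⟨k, hk⟩ := hx
        have hkC : (x:ℂ) = (a:ℂ) + (d:ℂ)*(k:ℂ) := by exact_mod_cast congrArg (Rat.cast (K := ℂ)) hk
        rw [ind_eq_one ⟨k, hk⟩, mul_one, one_mul]
        have harg : -((x:ℂ)*(y:ℂ)) = -((a:ℂ)*(y:ℂ)) + ((-(k*m) : ℤ):ℂ) := by
          push_cast
          linear_combination (-(y:ℂ)) * hkC + (-(k:ℂ)) * hdyC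
        rw [harg, e_add, e_int, mul_one]
      · rw [ind_eq_zero hx]; ring
    have key : (⟨f, hmem⟩ : Sc) = e (-((a:ℂ)*(y:ℂ))) • ⟨ind a d, ind_mem a d hd⟩ :=
      Subtype.ext hfeq
    rw [key, map_smul, smul_eq_mul,
      h_ind_translate h hinv a d hd (ind_mem a d hd) (ind_mem 0 d hd),
      h_ind_val h hnorm hinv d hd (ind_mem 0 d hd),
      ind_eq_one ⟨m, hm⟩]
    ring
  · have hdy : ¬∃ m : ℤ, d * y = (m : ℚ) := by
      rintro ⟨m, hmm⟩
      refine hy ⟨m, ?_⟩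
      rw [zero_add, one_div, ← hmm]
      field_simp
    have hne : e (-((d:ℂ)*(y:ℂ))) ≠ 1 := by
      have harg : -((d:ℂ)*(y:ℂ)) = ((-(d*y) : ℚ) : ℂ) := by push_cast; ring
      rw [harg]
      intro hcon
      obtain ⟨n, hn⟩ := (e_rat_eq_one_iff _).1 hcon
      exact hdy ⟨-n, by push_cast; linarith⟩
    have hshift : (fun x => f (x + d)) = e (-((d:ℂ)*(y:ℂ))) • f := by
      funext x
      simp only [hfdef, Pi.smul_apply, smul_eq_mul]
      have hind : ind a d (x + d) = ind a d x := by
        unfold ind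
        congr 1
        simp only [eq_iff_iff]
        constructor
        · rintro ⟨k, hk⟩; exact ⟨k - 1, by push_cast; linarith⟩
        · rintro ⟨k, hk⟩; exact ⟨k + 1, by push_cast; linarith⟩
      rw [hind]
      have harg : -((((x+d : ℚ)):ℂ)*(y:ℂ)) = -((d:ℂ)*(y:ℂ)) + -((x:ℂ)*(y:ℂ)) := by
        push_cast; ring
      rw [harg, e_add]
      ring
    have hmem' : (fun x => f (x + d)) ∈ Sc := by
      rw [hshift]; exact Sc.smul_mem _ hmem
    have e1 : h ⟨fun x => f (x + d), hmem'⟩ = h ⟨f, hmem⟩ := hinv d f hmem hmem'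
    have e2 : h ⟨fun x => f (x + d), hmem'⟩ = e (-((d:ℂ)*(y:ℂ))) * h ⟨f, hmem⟩ := by
      have : (⟨fun x => f (x + d), hmem'⟩ : Sc) = e (-((d:ℂ)*(y:ℂ))) • ⟨f, hmem⟩ :=
        Subtype.ext hshift
      rw [this, map_smul, smul_eq_mul]
    have h3 : (e (-((d:ℂ)*(y:ℂ))) - 1) * h ⟨f, hmem⟩ = 0 := by
      linear_combination e2.symm.trans e1
    rcases mul_eq_zero.1 h3 with h4 | h4
    · exact absurd (by linear_combination h4) hne
    · rw [h4, ind_eq_zero hy]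
      ring
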